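/- Discrete Hermite recursion: for all N ≥ 1 and t ∈ [0,1], (B^{H,n}_t)^{⋄ₙ(N+1)} = B^{H,n}_t·(B^{H,n}_t)^{⋄ₙN} − N·E[(B^{H,n}_t)²]·(B^{H,n}_t)^{⋄ₙ(N−1)} + R(B^{H,n}_t,N), where R(B^{H,n}_t,N) = N! Σ_{C⊆{1,…,⌊nt⌋},|C|=N−1} b^n_{t,C} Ξ^n_C Σ_{i∈C}(b^n_{t,i})², and the remainder satisfies E[R(B^{H,n}_t,N)²] ≤ 16 c_H⁴ N! N³ n^{−(4−4H)}. -/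

import Mathlib

open MeasureTheory ProbabilityTheory Finset
open scoped ENNReal

/-- The distribution of a symmetric ±1 Bernoulli random variable. -/
noncomputable def bernPM : Measure ℝ :=
  (1 / 2 : ℝ≥0∞) • Measure.dirac 1 + (1 / 2 : ℝ≥0∞) • Measure.dirac (-1)

/-- The Molchan–Golosov constant `c_H`. -/
noncomputable def cH (H : ℝ) : ℝ :=
  Real.sqrt (2 * H * Real.Gamma (3 / 2 - H) / (Real.Gamma (H + 1 / 2) * Real.Gamma (2 - 2 * H)))

/-- The Walsh monomial `Ξ_A = ∏_{i∈A} ξ_i`. -/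
def XiW {Ω : Type*} {n : ℕ} (ξ : Fin n → Ω → ℝ) (A : Finset (Fin n)) (ω : Ω) : ℝ :=
  ∏ i ∈ A, ξ i ω

/-- The discrete Wick product on Walsh coefficients. -/
def wickProd {n : ℕ} (x y : Finset (Fin n) → ℝ) : Finset (Fin n) → ℝ :=
  fun C => ∑ A : Finset (Fin n), ∑ B : Finset (Fin n),
    if A ∪ B = C ∧ Disjoint A B then x A * y B else 0

/-- Iterated discrete Wick powers on Walsh coefficients. -/
def wickPowC {n : ℕ} (x : Finset (Fin n) → ℝ) : ℕ → Finset (Fin n) → ℝ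
  | 0 => fun C => if C = ∅ then 1 else 0
  | k + 1 => wickProd (wickPowC x k) x

/-- Walsh coefficients of the walk `Σ_i b_i ξ_i`. -/
def singC {n : ℕ} (b : Fin n → ℝ) : Finset (Fin n) → ℝ :=
  fun C => ∑ i : Fin n, if C = {i} then b i else 0

/-- The random walk `B^{H,n}_t(ω) = Σ_i b_i ξ_i(ω)`. -/
def walkRV {Ω : Type*} {n : ℕ} (ξ : Fin n → Ω → ℝ) (b : Fin n → ℝ) (ω : Ω) : ℝ :=
  ∑ i : Fin n, b i * ξ i ω

/-- The `k`-th discrete Wick power of the walk, as a random variable. -/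
def wickPowRV {Ω : Type*} {n : ℕ} (ξ : Fin n → Ω → ℝ) (b : Fin n → ℝ) (k : ℕ) (ω : Ω) : ℝ :=
  ∑ C : Finset (Fin n), wickPowC (singC b) k C * XiW ξ C ω

/-! ### Auxiliary lemmas -/

lemma integral_id_bernPM : ∫ x, x ∂bernPM = 0 := by
  have hd : ∀ a : ℝ, Integrable (fun x : ℝ => x) (Measure.dirac a) := fun a =>
    (integrable_const a).congr (ae_eq_dirac (fun x : ℝ => x)).symm
  have h1 : Integrable (fun x : ℝ => x) ((1/2 : ℝ≥0∞) • Measure.dirac (1:ℝ)) :=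
    (hd 1).smul_measure (by norm_num)
  have h2 : Integrable (fun x : ℝ => x) ((1/2 : ℝ≥0∞) • Measure.dirac (-1:ℝ)) :=
    (hd (-1)).smul_measure (by norm_num)
  rw [bernPM, integral_add_measure h1 h2, integral_smul_measure, integral_smul_measure,
    integral_dirac, integral_dirac]
  norm_num

section AuxXi
variable {Ω : Type*} {n : ℕ} (ξ : Fin n → Ω → ℝ)

lemma xi_sq (hpm : ∀ (i : Fin n) (ω : Ω), ξ i ω = 1 ∨ ξ i ω = -1) (i : Fin n) (ω : Ω) :
    ξ i ω * ξ i ω = 1 := by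
  rcases hpm i ω with h | h <;> rw [h] <;> norm_num

lemma xiW_mul' (hpm : ∀ (i : Fin n) (ω : Ω), ξ i ω = 1 ∨ ξ i ω = -1) (A B : Finset (Fin n))
    (ω : Ω) : XiW ξ A ω * XiW ξ B ω = XiW ξ (symmDiff A B) ω := by
  unfold XiW
  rw [← Finset.prod_inter_mul_prod_diff A B, ← Finset.prod_inter_mul_prod_diff B A,
    Finset.inter_comm B A]
  have h1 : (∏ i ∈ A ∩ B, ξ i ω) * (∏ i ∈ A ∩ B, ξ i ω) = 1 := by
    rw [← Finset.prod_mul_distrib]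
    exact Finset.prod_eq_one fun i _ => xi_sq ξ hpm i ω
  have h2 : symmDiff A B = (A \ B) ∪ (B \ A) := by
    rw [symmDiff_def]; rfl
  rw [h2, Finset.prod_union disjoint_sdiff_sdiff]
  calc (∏ i ∈ A ∩ B, ξ i ω) * (∏ i ∈ A \ B, ξ i ω) * ((∏ i ∈ A ∩ B, ξ i ω) * ∏ i ∈ B \ A, ξ i ω)
      = ((∏ i ∈ A ∩ B, ξ i ω) * (∏ i ∈ A ∩ B, ξ i ω))
        * ((∏ i ∈ A \ B, ξ i ω) * ∏ i ∈ B \ A, ξ i ω) := by ring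
    _ = (∏ i ∈ A \ B, ξ i ω) * ∏ i ∈ B \ A, ξ i ω := by rw [h1, one_mul]

lemma xi_mul_xiW (hpm : ∀ (i : Fin n) (ω : Ω), ξ i ω = 1 ∨ ξ i ω = -1) (i : Fin n)
    (C : Finset (Fin n)) (ω : Ω) :
    ξ i ω * XiW ξ C ω = if i ∈ C then XiW ξ (C.erase i) ω else XiW ξ (insert i C) ω := by
  unfold XiW
  by_cases h : i ∈ C
  · rw [if_pos h, ← Finset.mul_prod_erase C _ h, ← mul_assoc, xi_sq ξ hpm, one_mul]
  · rw [if_neg h, Finset.prod_insert h]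

end AuxXi

section AuxInt
variable {Ω : Type*} [MeasurableSpace Ω] (P : Measure Ω) [IsProbabilityMeasure P]
  {n : ℕ} (ξ : Fin n → Ω → ℝ)

omit [MeasurableSpace Ω] in
lemma xiW_abs_le (hpm : ∀ (i : Fin n) (ω : Ω), ξ i ω = 1 ∨ ξ i ω = -1)
    (A : Finset (Fin n)) (ω : Ω) : |XiW ξ A ω| ≤ 1 := by
  rw [XiW, Finset.abs_prod]
  apply Finset.prod_le_one (fun i _ => abs_nonneg _)
  intro i _
  rcases hpm i ω with h | h <;> rw [h] <;> norm_num

lemma xiW_measurable (hmeas : ∀ i, Measurable (ξ i)) (A : Finset (Fin n)) :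
    Measurable (XiW ξ A) :=
  Finset.measurable_prod A fun i _ => hmeas i

lemma xiW_integrable (hmeas : ∀ i, Measurable (ξ i))
    (hpm : ∀ (i : Fin n) (ω : Ω), ξ i ω = 1 ∨ ξ i ω = -1) (A : Finset (Fin n)) :
    Integrable (XiW ξ A) P := by
  refine (integrable_const (1:ℝ)).mono' (xiW_measurable ξ hmeas A).aestronglyMeasurable ?_
  exact ae_of_all _ fun ω => by rw [Real.norm_eq_abs]; exact xiW_abs_le ξ hpm A ω

lemma exi (hmeas : ∀ i, Measurable (ξ i)) (hdist : ∀ i, Measure.map (ξ i) P = bernPM)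
    (i : Fin n) : ∫ ω, ξ i ω ∂P = 0 := by
  have := integral_map (φ := ξ i) (μ := P) (f := fun x : ℝ => x) (hmeas i).aemeasurable
    aestronglyMeasurable_id
  rw [hdist i, integral_id_bernPM] at this
  exact this.symm

lemma exiW (hmeas : ∀ i, Measurable (ξ i)) (hindep : iIndepFun ξ P)
    (hdist : ∀ i, Measure.map (ξ i) P = bernPM) (A : Finset (Fin n)) :
    ∫ ω, XiW ξ A ω ∂P = if A = ∅ then 1 else 0 := by
  classical
  induction A using Finset.induction_on with
  | empty => simp [XiW]
  | @insert i A hi ih =>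
    have hX : IndepFun (∏ j ∈ A, ξ j) (ξ i) P :=
      hindep.indepFun_finsetProd_of_notMem hmeas hi
    have key : ∫ ω, XiW ξ (insert i A) ω ∂P
        = (∫ ω, (∏ j ∈ A, ξ j) ω ∂P) * ∫ ω, ξ i ω ∂P := by
      have hm : Measurable (∏ j ∈ A, ξ j) := by
        have he : (∏ j ∈ A, ξ j) = fun a => ∏ j ∈ A, ξ j a := funext fun a => Finset.prod_apply a A ξ
        rw [he]; exact Finset.measurable_prod A fun j _ => hmeas j
      rw [← IndepFun.integral_mul_eq_mul_integral hX hm.aestronglyMeasurable (hmeas i).aestronglyMeasurable]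
      congr 1
      funext ω
      rw [XiW, Finset.prod_insert hi, Pi.mul_apply, Finset.prod_apply, mul_comm]
    rw [key, exi P ξ hmeas hdist i, mul_zero, if_neg (Finset.insert_ne_empty i A)]

lemma exiW_mul (hmeas : ∀ i, Measurable (ξ i)) (hindep : iIndepFun ξ P)
    (hdist : ∀ i, Measure.map (ξ i) P = bernPM)
    (hpm : ∀ (i : Fin n) (ω : Ω), ξ i ω = 1 ∨ ξ i ω = -1) (A B : Finset (Fin n)) :
    ∫ ω, XiW ξ A ω * XiW ξ B ω ∂P = if A = B then 1 else 0 := by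
  simp_rw [xiW_mul' ξ hpm A B]
  rw [exiW P ξ hmeas hindep hdist]
  congr 1
  simp [← Finset.bot_eq_empty, symmDiff_eq_bot, eq_iff_iff]

end AuxInt

/-! ### Combinatorial lemmas -/

lemma cond_iff {n : ℕ} (i : Fin n) (A C : Finset (Fin n)) :
    (A ∪ {i} = C ∧ Disjoint A {i}) ↔ (i ∈ C ∧ A = C.erase i) := by
  rw [Finset.disjoint_singleton_right]
  constructor
  · rintro ⟨rfl, hi⟩
    refine ⟨Finset.mem_union_right _ (Finset.mem_singleton_self i), ?_⟩
    rw [Finset.erase_union_distrib, Finset.erase_eq_of_notMem hi, Finset.erase_singleton,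
      Finset.union_empty]
  · rintro ⟨hi, rfl⟩
    refine ⟨?_, Finset.notMem_erase i C⟩
    have : C.erase i ∪ {i} = insert i (C.erase i) := by
      ext x; simp [Finset.mem_insert, or_comm]
    rw [this, Finset.insert_erase hi]

lemma wickProd_singC {n : ℕ} (x : Finset (Fin n) → ℝ) (b : Fin n → ℝ) (C : Finset (Fin n)) :
    wickProd x (singC b) C = ∑ i ∈ C, x (C.erase i) * b i := by
  unfold wickProd singC
  have step1 : ∀ A B : Finset (Fin n),
      (if A ∪ B = C ∧ Disjoint A B then x A * ∑ i : Fin n, (if B = {i} then b i else 0) else 0)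
      = ∑ i : Fin n, if B = {i} then (if A ∪ B = C ∧ Disjoint A B then x A * b i else 0) else 0 := by
    intro A B
    split_ifs with h
    · rw [Finset.mul_sum]
      exact Finset.sum_congr rfl fun i _ => by split_ifs with h2 <;> simp [h, h2]
    · exact (Finset.sum_eq_zero fun i _ => by simp [h]).symm
  simp_rw [step1]
  rw [show (∑ A : Finset (Fin n), ∑ B : Finset (Fin n), ∑ i : Fin n,
      if B = {i} then (if A ∪ B = C ∧ Disjoint A B then x A * b i else 0) else 0)
      = ∑ i : Fin n, ∑ A : Finset (Fin n), ∑ B : Finset (Fin n),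
      if B = {i} then (if A ∪ B = C ∧ Disjoint A B then x A * b i else 0) else 0 from
    (Finset.sum_congr rfl fun A _ => Finset.sum_comm).trans Finset.sum_comm]
  have step2 : ∀ i : Fin n,
      (∑ A : Finset (Fin n), ∑ B : Finset (Fin n),
        if B = {i} then (if A ∪ B = C ∧ Disjoint A B then x A * b i else 0) else 0)
      = if i ∈ C then x (C.erase i) * b i else 0 := by
    intro i
    have : ∀ A : Finset (Fin n),
        (∑ B : Finset (Fin n),
          if B = {i} then (if A ∪ B = C ∧ Disjoint A B then x A * b i else 0) else 0)
        = if A ∪ {i} = C ∧ Disjoint A {i} then x A * b i else 0 := fun A => by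
      rw [Finset.sum_ite_eq' univ ({i} : Finset (Fin n))
        (fun B => if A ∪ B = C ∧ Disjoint A B then x A * b i else 0), if_pos (mem_univ _)]
    simp_rw [this, cond_iff]
    by_cases hi : i ∈ C <;> simp [hi, Finset.sum_ite_eq']
  calc (∑ i : Fin n, ∑ A : Finset (Fin n), ∑ B : Finset (Fin n),
      if B = {i} then (if A ∪ B = C ∧ Disjoint A B then x A * b i else 0) else 0)
      = ∑ i : Fin n, if i ∈ C then x (C.erase i) * b i else 0 :=
        Finset.sum_congr rfl fun i _ => step2 i
    _ = ∑ i ∈ C, x (C.erase i) * b i := by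
        rw [Finset.sum_ite_mem, Finset.univ_inter]

lemma wickPowC_singC {n : ℕ} (b : Fin n → ℝ) :
    ∀ (k : ℕ) (C : Finset (Fin n)),
      wickPowC (singC b) k C = if C.card = k then (k.factorial : ℝ) * ∏ i ∈ C, b i else 0
  | 0, C => by
    show (if C = ∅ then (1:ℝ) else 0) = _
    by_cases h : C = ∅ <;> simp [h, Finset.card_eq_zero]
  | (k+1), C => by
    show wickProd (wickPowC (singC b) k) (singC b) C = _
    rw [wickProd_singC]
    by_cases hC : C.card = k + 1
    · rw [if_pos hC]
      have : ∀ i ∈ C, wickPowC (singC b) k (C.erase i) * b i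
          = (k.factorial : ℝ) * ∏ j ∈ C, b j := by
        intro i hi
        rw [wickPowC_singC b k, if_pos (by rw [Finset.card_erase_of_mem hi, hC]; rfl),
          mul_assoc, Finset.prod_erase_mul C b hi]
      rw [Finset.sum_congr rfl this, Finset.sum_const, hC, nsmul_eq_mul]
      push_cast [Nat.factorial_succ]
      ring
    · rw [if_neg hC]
      refine Finset.sum_eq_zero fun i hi => ?_
      rw [wickPowC_singC b k, if_neg, zero_mul]
      rw [Finset.card_erase_of_mem hi]
      intro h
      apply hC
      have : 1 ≤ C.card := Finset.card_pos.2 ⟨i, hi⟩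
      omega

lemma sum_card_succ_reindex {n k : ℕ} (F : Finset (Fin n) → Fin n → ℝ) :
    ∑ C ∈ univ.filter (fun C : Finset (Fin n) => C.card = k + 1), ∑ i ∈ C, F C i
    = ∑ D ∈ univ.filter (fun D : Finset (Fin n) => D.card = k), ∑ i ∈ Dᶜ, F (insert i D) i := by
  rw [Finset.sum_sigma', Finset.sum_sigma']
  refine Finset.sum_bij' (fun p _ => (⟨p.1.erase p.2, p.2⟩ : Σ _ : Finset (Fin n), Fin n))
    (fun q _ => (⟨insert q.2 q.1, q.2⟩ : Σ _ : Finset (Fin n), Fin n)) ?_ ?_ ?_ ?_ ?_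
  · rintro ⟨C, i⟩ hp
    simp only [Finset.mem_sigma, Finset.mem_filter, Finset.mem_univ, true_and] at hp ⊢
    exact ⟨by rw [Finset.card_erase_of_mem hp.2, hp.1]; rfl,
      Finset.mem_compl.2 (Finset.notMem_erase _ _)⟩
  · rintro ⟨D, i⟩ hq
    simp only [Finset.mem_sigma, Finset.mem_filter, Finset.mem_univ, true_and,
      Finset.mem_compl] at hq ⊢
    exact ⟨by rw [Finset.card_insert_of_notMem hq.2, hq.1], Finset.mem_insert_self _ _⟩
  · rintro ⟨C, i⟩ hp
    simp only [Finset.mem_sigma, Finset.mem_filter, Finset.mem_univ, true_and] at hp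
    simp [Finset.insert_erase hp.2]
  · rintro ⟨D, i⟩ hq
    simp only [Finset.mem_sigma, Finset.mem_filter, Finset.mem_univ, true_and,
      Finset.mem_compl] at hq
    simp [Finset.erase_insert hq.2]
  · rintro ⟨C, i⟩ hp
    simp only [Finset.mem_sigma, Finset.mem_filter, Finset.mem_univ, true_and] at hp
    rw [Finset.insert_erase hp.2]

lemma esymm_le {n : ℕ} (x : Fin n → ℝ) (hx : ∀ i, 0 ≤ x i) :
    ∀ k : ℕ, (k.factorial : ℝ) * ∑ C ∈ univ.filter (fun C : Finset (Fin n) => C.card = k),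
      ∏ i ∈ C, x i ≤ (∑ i : Fin n, x i) ^ k
  | 0 => by simp [Finset.filter_eq', Finset.card_eq_zero]
  | (k+1) => by
    have hS : 0 ≤ ∑ i : Fin n, x i := Finset.sum_nonneg fun i _ => hx i
    have key : ((k+1) : ℝ) * ∑ C ∈ univ.filter (fun C : Finset (Fin n) => C.card = k + 1),
        ∏ i ∈ C, x i
        = ∑ D ∈ univ.filter (fun D : Finset (Fin n) => D.card = k),
            ∑ i ∈ Dᶜ, x i * ∏ j ∈ D, x j := by
      have e1 : ((k+1) : ℝ) * ∑ C ∈ univ.filter (fun C : Finset (Fin n) => C.card = k + 1),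
          ∏ i ∈ C, x i
          = ∑ C ∈ univ.filter (fun C : Finset (Fin n) => C.card = k + 1),
              ∑ i ∈ C, ∏ j ∈ C, x j := by
        rw [Finset.mul_sum]
        refine Finset.sum_congr rfl fun C hC => ?_
        simp only [Finset.mem_filter] at hC
        rw [Finset.sum_const, hC.2, nsmul_eq_mul]
        push_cast; ring
      rw [e1, sum_card_succ_reindex (fun C i => ∏ j ∈ C, x j)]
      refine Finset.sum_congr rfl fun D hD => Finset.sum_congr rfl fun i hi => ?_
      rw [Finset.prod_insert (Finset.mem_compl.1 hi)]
    have h1 : ∑ D ∈ univ.filter (fun D : Finset (Fin n) => D.card = k),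
        ∑ i ∈ Dᶜ, x i * ∏ j ∈ D, x j
        ≤ (∑ i : Fin n, x i) * ∑ D ∈ univ.filter (fun D : Finset (Fin n) => D.card = k),
            ∏ j ∈ D, x j := by
      rw [Finset.mul_sum]
      refine Finset.sum_le_sum fun D _ => ?_
      rw [← Finset.sum_mul]
      refine mul_le_mul_of_nonneg_right ?_ (Finset.prod_nonneg fun j _ => hx j)
      exact Finset.sum_le_sum_of_subset_of_nonneg (Finset.subset_univ _) fun i _ _ => hx i
    have h2 := esymm_le x hx k
    calc ((k+1).factorial : ℝ) * ∑ C ∈ univ.filter (fun C : Finset (Fin n) => C.card = k + 1),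
        ∏ i ∈ C, x i
        = (k.factorial : ℝ) * (((k+1) : ℝ) * ∑ C ∈ univ.filter
            (fun C : Finset (Fin n) => C.card = k + 1), ∏ i ∈ C, x i) := by
          push_cast [Nat.factorial_succ]; ring
      _ = (k.factorial : ℝ) * ∑ D ∈ univ.filter (fun D : Finset (Fin n) => D.card = k),
            ∑ i ∈ Dᶜ, x i * ∏ j ∈ D, x j := by rw [key]
      _ ≤ (k.factorial : ℝ) * ((∑ i : Fin n, x i) * ∑ D ∈ univ.filter
            (fun D : Finset (Fin n) => D.card = k), ∏ j ∈ D, x j) :=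
          mul_le_mul_of_nonneg_left h1 (by positivity)
      _ = (∑ i : Fin n, x i) * ((k.factorial : ℝ) * ∑ D ∈ univ.filter
            (fun D : Finset (Fin n) => D.card = k), ∏ j ∈ D, x j) := by ring
      _ ≤ (∑ i : Fin n, x i) * (∑ i : Fin n, x i) ^ k :=
          mul_le_mul_of_nonneg_left h2 hS
      _ = (∑ i : Fin n, x i) ^ (k+1) := by ring

lemma wickPowRV_eq {Ω : Type*} {n : ℕ} (ξ : Fin n → Ω → ℝ) (b : Fin n → ℝ) (k : ℕ) (ω : Ω) :
    wickPowRV ξ b k ω = (k.factorial : ℝ) *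
      ∑ C ∈ univ.filter (fun C : Finset (Fin n) => C.card = k), (∏ i ∈ C, b i) * XiW ξ C ω := by
  unfold wickPowRV
  simp_rw [wickPowC_singC, ite_mul, zero_mul]
  rw [← Finset.sum_filter, Finset.mul_sum]
  exact Finset.sum_congr rfl fun C _ => by ring
/-- Discrete Hermite recursion: for `N ≥ 1` and `t ∈ [0,1]`,
`(B^{H,n}_t)^{⋄ₙ(N+1)} = B^{H,n}_t·(B^{H,n}_t)^{⋄ₙN} − N·E[(B^{H,n}_t)²]·(B^{H,n}_t)^{⋄ₙ(N−1)}
  + R(B^{H,n}_t,N)` with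
`R(B^{H,n}_t,N) = N! Σ_{|C|=N−1} b^n_{t,C} Ξ^n_C Σ_{i∈C}(b^n_{t,i})²` and
`E[R(B^{H,n}_t,N)²] ≤ 16 c_H⁴ N! N³ n^{−(4−4H)}`. -/
theorem stmt16 {Ω : Type*} [MeasurableSpace Ω] (P : Measure Ω) [IsProbabilityMeasure P]
    (H : ℝ) (hH : H ∈ Set.Ioo (1 / 2 : ℝ) 1) (n : ℕ) (hn : 1 ≤ n)
    (ξ : Fin n → Ω → ℝ) (hmeas : ∀ i, Measurable (ξ i))
    (hindep : iIndepFun ξ P)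
    (hdist : ∀ i, Measure.map (ξ i) P = bernPM)
    (hpm : ∀ (i : Fin n) (ω : Ω), ξ i ω = 1 ∨ ξ i ω = -1)
    (t : ℝ) (ht : t ∈ Set.Icc (0 : ℝ) 1) (b : Fin n → ℝ)
    (hbd : ∀ i, |b i| ≤ 2 * cH H * (n : ℝ) ^ (-(1 - H)))
    (hen : ∑ i : Fin n, (b i) ^ 2 ≤ t ^ (2 * H))
    (N : ℕ) (hN : 1 ≤ N) :
    (∀ ω : Ω,
      wickPowRV ξ b (N + 1) ω
        = walkRV ξ b ω * wickPowRV ξ b N ω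
          - (N : ℝ) * (∫ ω', (walkRV ξ b ω') ^ 2 ∂P) * wickPowRV ξ b (N - 1) ω
          + (N.factorial : ℝ) *
              ∑ C ∈ univ.filter (fun C : Finset (Fin n) => C.card = N - 1),
                (∏ i ∈ C, b i) * XiW ξ C ω * (∑ i ∈ C, (b i) ^ 2)) ∧
    (∫ ω, ((N.factorial : ℝ) *
        ∑ C ∈ univ.filter (fun C : Finset (Fin n) => C.card = N - 1),
          (∏ i ∈ C, b i) * XiW ξ C ω * (∑ i ∈ C, (b i) ^ 2)) ^ 2 ∂P
      ≤ 16 * (cH H) ^ 4 * (N.factorial : ℝ) * (N : ℝ) ^ 3 * (n : ℝ) ^ (-(4 - 4 * H))) := by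
  obtain ⟨M, rfl⟩ : ∃ M, N = M + 1 := ⟨N - 1, by omega⟩
  simp only [Nat.add_sub_cancel]
  set S : ℝ := ∑ i : Fin n, b i ^ 2 with hS
  -- expectation of the square of the walk
  have hEw : (∫ ω', (walkRV ξ b ω') ^ 2 ∂P) = S := by
    have hpt : ∀ ω, (walkRV ξ b ω) ^ 2
        = ∑ i : Fin n, ∑ j : Fin n, (b i * b j) * XiW ξ (symmDiff {i} {j}) ω := by
      intro ω
      rw [walkRV, sq, Finset.sum_mul_sum]
      refine Finset.sum_congr rfl fun i _ => Finset.sum_congr rfl fun j _ => ?_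
      rw [← xiW_mul' ξ hpm]
      simp only [XiW, Finset.prod_singleton]
      ring
    simp_rw [hpt]
    rw [integral_finset_sum _ (fun i _ => integrable_finset_sum _
      (fun j _ => ((xiW_integrable P ξ hmeas hpm _).const_mul _)))]
    have h2 : ∀ i : Fin n,
        (∫ ω, (∑ j : Fin n, (b i * b j) * XiW ξ (symmDiff {i} {j}) ω) ∂P) = b i ^ 2 := by
      intro i
      rw [integral_finset_sum _ (fun j _ => (xiW_integrable P ξ hmeas hpm _).const_mul _)]
      have h3 : ∀ j : Fin n, (∫ ω, (b i * b j) * XiW ξ (symmDiff {i} {j}) ω ∂P)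
          = if i = j then b i * b j else 0 := by
        intro j
        rw [integral_const_mul, exiW P ξ hmeas hindep hdist]
        by_cases h : i = j
        · simp [h, ← Finset.bot_eq_empty, symmDiff_self]
        · rw [if_neg, mul_zero, if_neg h]
          rw [← Finset.bot_eq_empty, symmDiff_eq_bot]
          simp [Finset.singleton_injective.ne h]
      simp_rw [h3]
      rw [Finset.sum_ite_eq, if_pos (mem_univ i), sq]
    simp_rw [h2]
    rfl
  constructor
  · -- the algebraic identity
    intro ω
    have hkey : walkRV ξ b ω * wickPowRV ξ b (M + 1) ω
        = ((M+1).factorial : ℝ) *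
          ( ((M+2 : ℕ) : ℝ) * (∑ C ∈ univ.filter (fun C : Finset (Fin n) => C.card = M + 1 + 1),
              (∏ i ∈ C, b i) * XiW ξ C ω)
            + ∑ C ∈ univ.filter (fun C : Finset (Fin n) => C.card = M),
                (S - ∑ i ∈ C, b i ^ 2) * ((∏ i ∈ C, b i) * XiW ξ C ω) ) := by
      rw [wickPowRV_eq ξ b (M+1) ω, walkRV]
      have e1 : (∑ i : Fin n, b i * ξ i ω) *
          (((M+1).factorial : ℝ) * ∑ C ∈ univ.filter (fun C : Finset (Fin n) => C.card = M + 1),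
            (∏ i ∈ C, b i) * XiW ξ C ω)
          = ((M+1).factorial : ℝ) * ∑ C ∈ univ.filter (fun C : Finset (Fin n) => C.card = M + 1),
              ∑ i : Fin n, (b i * ∏ j ∈ C, b j) * (ξ i ω * XiW ξ C ω) := by
        rw [mul_left_comm]
        congr 1
        rw [Finset.mul_sum]
        refine Finset.sum_congr rfl fun C _ => ?_
        rw [Finset.sum_mul]
        exact Finset.sum_congr rfl fun i _ => by ring
      rw [e1]
      congr 1
      have e2 : ∀ C ∈ univ.filter (fun C : Finset (Fin n) => C.card = M + 1),
          (∑ i : Fin n, (b i * ∏ j ∈ C, b j) * (ξ i ω * XiW ξ C ω))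
          = (∑ i ∈ C, (b i * ∏ j ∈ C, b j) * XiW ξ (C.erase i) ω)
            + ∑ i ∈ Cᶜ, (b i * ∏ j ∈ C, b j) * XiW ξ (insert i C) ω := by
        intro C _
        rw [← Finset.sum_add_sum_compl C]
        congr 1
        · exact Finset.sum_congr rfl fun i hi => by rw [xi_mul_xiW ξ hpm, if_pos hi]
        · exact Finset.sum_congr rfl fun i hi => by
            rw [xi_mul_xiW ξ hpm, if_neg (Finset.mem_compl.1 hi)]
      rw [Finset.sum_congr rfl e2, Finset.sum_add_distrib]
      have e3 : ∑ C ∈ univ.filter (fun C : Finset (Fin n) => C.card = M + 1),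
          ∑ i ∈ C, (b i * ∏ j ∈ C, b j) * XiW ξ (C.erase i) ω
          = ∑ C ∈ univ.filter (fun C : Finset (Fin n) => C.card = M),
              (S - ∑ i ∈ C, b i ^ 2) * ((∏ i ∈ C, b i) * XiW ξ C ω) := by
        rw [sum_card_succ_reindex (fun C i => (b i * ∏ j ∈ C, b j) * XiW ξ (C.erase i) ω)]
        refine Finset.sum_congr rfl fun D hD => ?_
        have e3a : ∀ i ∈ Dᶜ, (b i * ∏ j ∈ insert i D, b j) * XiW ξ ((insert i D).erase i) ω
            = b i ^ 2 * ((∏ j ∈ D, b j) * XiW ξ D ω) := by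
          intro i hi
          have hiD := Finset.mem_compl.1 hi
          rw [Finset.prod_insert hiD, Finset.erase_insert hiD]; ring
        rw [Finset.sum_congr rfl e3a, ← Finset.sum_mul]
        congr 1
        have := Finset.sum_add_sum_compl D (fun i => b i ^ 2)
        rw [hS]
        linarith
      have e4 : ∑ C ∈ univ.filter (fun C : Finset (Fin n) => C.card = M + 1),
          ∑ i ∈ Cᶜ, (b i * ∏ j ∈ C, b j) * XiW ξ (insert i C) ω
          = ((M+2 : ℕ) : ℝ) * ∑ C ∈ univ.filter (fun C : Finset (Fin n) => C.card = M + 1 + 1),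
              (∏ i ∈ C, b i) * XiW ξ C ω := by
        have e4a : ∀ C ∈ univ.filter (fun C : Finset (Fin n) => C.card = M + 1),
            (∑ i ∈ Cᶜ, (b i * ∏ j ∈ C, b j) * XiW ξ (insert i C) ω)
            = ∑ i ∈ Cᶜ, (∏ j ∈ insert i C, b j) * XiW ξ (insert i C) ω :=
          fun C _ => Finset.sum_congr rfl fun i hi => by
            rw [Finset.prod_insert (Finset.mem_compl.1 hi)]
        rw [Finset.sum_congr rfl e4a,
          ← sum_card_succ_reindex (k := M + 1) (fun C _ => (∏ j ∈ C, b j) * XiW ξ C ω),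
          Finset.mul_sum]
        refine Finset.sum_congr rfl fun C hC => ?_
        rw [Finset.sum_const, (Finset.mem_filter.1 hC).2, nsmul_eq_mul]
      rw [e3, e4]
      ring
    rw [wickPowRV_eq ξ b (M + 1 + 1) ω, wickPowRV_eq ξ b M ω, hkey, hEw]
    have hsplit : ∑ C ∈ univ.filter (fun C : Finset (Fin n) => C.card = M),
        (S - ∑ i ∈ C, b i ^ 2) * ((∏ i ∈ C, b i) * XiW ξ C ω)
        = S * (∑ C ∈ univ.filter (fun C : Finset (Fin n) => C.card = M),
            (∏ i ∈ C, b i) * XiW ξ C ω)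
          - ∑ C ∈ univ.filter (fun C : Finset (Fin n) => C.card = M),
              (∏ i ∈ C, b i) * XiW ξ C ω * (∑ i ∈ C, b i ^ 2) := by
      rw [Finset.mul_sum, ← Finset.sum_sub_distrib]
      exact Finset.sum_congr rfl fun C _ => by ring
    rw [hsplit]
    simp only [Nat.factorial_succ]
    push_cast; ring
  · -- the moment bound on the remainder
    set F0 := univ.filter (fun C : Finset (Fin n) => C.card = M) with hF0
    set g : Finset (Fin n) → ℝ := fun C => (∏ i ∈ C, b i) * (∑ i ∈ C, b i ^ 2) with hg
    have hcH : 0 ≤ cH H := Real.sqrt_nonneg _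
    set β : ℝ := 2 * cH H * (n : ℝ) ^ (-(1 - H)) with hβ
    have hβ0 : 0 ≤ β := by
      rw [hβ]
      refine mul_nonneg (mul_nonneg (by norm_num) hcH) (Real.rpow_nonneg (Nat.cast_nonneg n) _)
    have hpt2 : ∀ ω : Ω,
        (((M+1).factorial : ℝ) * ∑ C ∈ F0, (∏ i ∈ C, b i) * XiW ξ C ω * (∑ i ∈ C, b i ^ 2)) ^ 2
        = ((M+1).factorial : ℝ) ^ 2 *
            ∑ C ∈ F0, ∑ D ∈ F0, (g C * g D) * XiW ξ (symmDiff C D) ω := by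
      intro ω
      rw [mul_pow]
      congr 1
      rw [sq, Finset.sum_mul_sum]
      refine Finset.sum_congr rfl fun C _ => Finset.sum_congr rfl fun D _ => ?_
      rw [← xiW_mul' ξ hpm C D ω, hg]
      ring
    have hint : ∫ ω, (((M+1).factorial : ℝ) *
          ∑ C ∈ F0, (∏ i ∈ C, b i) * XiW ξ C ω * (∑ i ∈ C, b i ^ 2)) ^ 2 ∂P
        = ((M+1).factorial : ℝ) ^ 2 *
            ∑ C ∈ F0, ∑ D ∈ F0, (g C * g D) * (if symmDiff C D = ∅ then 1 else 0) := by
      simp_rw [hpt2]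
      rw [integral_const_mul, integral_finset_sum _ (fun C _ => integrable_finset_sum _
        (fun D _ => (xiW_integrable P ξ hmeas hpm _).const_mul _))]
      congr 1
      refine Finset.sum_congr rfl fun C _ => ?_
      rw [integral_finset_sum _ (fun D _ => (xiW_integrable P ξ hmeas hpm _).const_mul _)]
      exact Finset.sum_congr rfl fun D _ => by
        rw [integral_const_mul, exiW P ξ hmeas hindep hdist]
    have hdiag : ∀ C ∈ F0,
        (∑ D ∈ F0, (g C * g D) * (if symmDiff C D = ∅ then 1 else 0)) = g C ^ 2 := by
      intro C hC
      rw [Finset.sum_eq_single_of_mem C hC]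
      · rw [if_pos, mul_one, sq]
        rw [← Finset.bot_eq_empty]
        exact symmDiff_self C
      · intro D hD hne
        rw [if_neg, mul_zero]
        rw [← Finset.bot_eq_empty, symmDiff_eq_bot]
        exact fun h => hne h.symm
    have hb2 : ∀ i, b i ^ 2 ≤ β ^ 2 := fun i => by
      rw [← sq_abs]; exact pow_le_pow_left₀ (abs_nonneg _) (hbd i) 2
    have hgC : ∀ C ∈ F0, g C ^ 2 ≤ (((M:ℝ)+1) ^ 2 * β ^ 4) * ∏ i ∈ C, b i ^ 2 := by
      intro C hC
      have hcard : C.card = M := (Finset.mem_filter.1 hC).2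
      have hs0 : 0 ≤ ∑ i ∈ C, b i ^ 2 := Finset.sum_nonneg fun i _ => sq_nonneg _
      have hs1 : (∑ i ∈ C, b i ^ 2) ≤ ((M:ℝ)+1) * β ^ 2 := by
        calc ∑ i ∈ C, b i ^ 2 ≤ ∑ _i ∈ C, β ^ 2 := Finset.sum_le_sum fun i _ => hb2 i
          _ = (M : ℝ) * β ^ 2 := by rw [Finset.sum_const, hcard, nsmul_eq_mul]
          _ ≤ ((M:ℝ)+1) * β ^ 2 := by nlinarith [sq_nonneg β]
      have hge : g C ^ 2 = (∏ i ∈ C, b i ^ 2) * (∑ i ∈ C, b i ^ 2) ^ 2 := by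
        rw [hg, mul_pow, ← Finset.prod_pow]
      rw [hge]
      have h2 : (∑ i ∈ C, b i ^ 2) ^ 2 ≤ (((M:ℝ)+1) * β ^ 2) ^ 2 := pow_le_pow_left₀ hs0 hs1 2
      calc (∏ i ∈ C, b i ^ 2) * (∑ i ∈ C, b i ^ 2) ^ 2
          ≤ (∏ i ∈ C, b i ^ 2) * (((M:ℝ)+1) * β ^ 2) ^ 2 :=
            mul_le_mul_of_nonneg_left h2 (Finset.prod_nonneg fun i _ => sq_nonneg _)
        _ = (((M:ℝ)+1) ^ 2 * β ^ 4) * ∏ i ∈ C, b i ^ 2 := by ring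
    have hesymm : (M.factorial : ℝ) * ∑ C ∈ F0, ∏ i ∈ C, b i ^ 2 ≤ 1 := by
      refine le_trans (esymm_le (fun i => b i ^ 2) (fun i => sq_nonneg _) M) ?_
      have h1 : (∑ i : Fin n, b i ^ 2) ≤ 1 :=
        le_trans hen (Real.rpow_le_one ht.1 ht.2 (by linarith [hH.1]))
      exact pow_le_one₀ (Finset.sum_nonneg fun i _ => sq_nonneg _) h1
    have hprodsum0 : 0 ≤ ∑ C ∈ F0, ∏ i ∈ C, b i ^ 2 :=
      Finset.sum_nonneg fun C _ => Finset.prod_nonneg fun i _ => sq_nonneg _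
    have hβ4 : β ^ 4 = 16 * cH H ^ 4 * (n : ℝ) ^ (-(4 - 4 * H)) := by
      have hn0 : (0:ℝ) ≤ (n : ℝ) := Nat.cast_nonneg n
      have hpow : ((n : ℝ) ^ (-(1 - H))) ^ (4:ℕ) = (n : ℝ) ^ (-(4 - 4 * H)) := by
        rw [← Real.rpow_natCast ((n : ℝ) ^ (-(1 - H))) 4, ← Real.rpow_mul hn0]
        congr 1
        push_cast
        ring
      calc β ^ 4 = 16 * cH H ^ 4 * ((n : ℝ) ^ (-(1 - H))) ^ (4:ℕ) := by rw [hβ]; ring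
        _ = 16 * cH H ^ 4 * (n : ℝ) ^ (-(4 - 4 * H)) := by rw [hpow]
    have hfac0 : (0:ℝ) ≤ ((M+1).factorial : ℝ) * ((M:ℝ)+1) ^ 3 * β ^ 4 :=
      mul_nonneg (mul_nonneg (Nat.cast_nonneg _) (by positivity)) (by positivity)
    calc ∫ ω, (((M+1).factorial : ℝ) *
          ∑ C ∈ F0, (∏ i ∈ C, b i) * XiW ξ C ω * (∑ i ∈ C, b i ^ 2)) ^ 2 ∂P
        = ((M+1).factorial : ℝ) ^ 2 * ∑ C ∈ F0, g C ^ 2 := by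
          rw [hint]; congr 1; exact Finset.sum_congr rfl hdiag
      _ ≤ ((M+1).factorial : ℝ) ^ 2 * ((((M:ℝ)+1) ^ 2 * β ^ 4) * ∑ C ∈ F0, ∏ i ∈ C, b i ^ 2) := by
          refine mul_le_mul_of_nonneg_left ?_ (by positivity)
          calc ∑ C ∈ F0, g C ^ 2
              ≤ ∑ C ∈ F0, (((M:ℝ)+1) ^ 2 * β ^ 4) * ∏ i ∈ C, b i ^ 2 := Finset.sum_le_sum hgC
            _ = (((M:ℝ)+1) ^ 2 * β ^ 4) * ∑ C ∈ F0, ∏ i ∈ C, b i ^ 2 := by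
                rw [Finset.mul_sum]
      _ = (((M+1).factorial : ℝ) * ((M:ℝ)+1) ^ 3 * β ^ 4) *
            ((M.factorial : ℝ) * ∑ C ∈ F0, ∏ i ∈ C, b i ^ 2) := by
          push_cast [Nat.factorial_succ]
          ring
      _ ≤ (((M+1).factorial : ℝ) * ((M:ℝ)+1) ^ 3 * β ^ 4) * 1 :=
          mul_le_mul_of_nonneg_left hesymm hfac0
      _ = 16 * cH H ^ 4 * ((M+1).factorial : ℝ) * ((M+1 : ℕ) : ℝ) ^ 3 * (n : ℝ) ^ (-(4 - 4 * H)) := by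
          rw [mul_one, hβ4]
          push_cast
          ring
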